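/- For each dimension p ≥ 1 there exists a finite constant κ_p depending only on p with the following property. Let Y_1, …, Y_n be i.i.d. copies of a random vector Y ∈ ℝ^p with mean μ = EY and E‖Y‖² < ∞, let Ȳ be the sample mean, and let Ω̆ = ( (1/n) Σ_{i=1}^n ((Y_i − Ȳ)(Y_i − Ȳ)ᵀ)^{1/2} )² be the sample d_S-covariance. Then E[ d_S(Ω̆, cov_{d_S}(Y)) ] ≤ κ_p √( E‖Y − μ‖² / n ). -/

import Mathlib

open Matrix MeasureTheory ProbabilityTheory

noncomputable def eunorm {p : ℕ} (x : Fin p → ℝ) : ℝ := Real.sqrt (∑ i, x i ^ 2)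

noncomputable def frob {p : ℕ} (M : Matrix (Fin p) (Fin p) ℝ) : ℝ :=
  Real.sqrt (∑ i, ∑ j, M i j ^ 2)

open Classical in
noncomputable def msqrt {p : ℕ} (A : Matrix (Fin p) (Fin p) ℝ) : Matrix (Fin p) (Fin p) ℝ :=
  if h : A.PosSemidef then
    (h.1.eigenvectorUnitary : Matrix (Fin p) (Fin p) ℝ) *
      diagonal ((RCLike.ofReal : ℝ → ℝ) ∘ Real.sqrt ∘ h.1.eigenvalues) *
      (star h.1.eigenvectorUnitary : Matrix (Fin p) (Fin p) ℝ)
  else 0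

noncomputable def dS {p : ℕ} (A B : Matrix (Fin p) (Fin p) ℝ) : ℝ := frob (msqrt A - msqrt B)

noncomputable def mExp {p : ℕ} {Ωs : Type*} [MeasurableSpace Ωs] (μ : Measure Ωs)
    (F : Ωs → Matrix (Fin p) (Fin p) ℝ) : Matrix (Fin p) (Fin p) ℝ :=
  Matrix.of fun i j => ∫ ω, F ω i j ∂μ

noncomputable def covDS {p : ℕ} {Ωs : Type*} [MeasurableSpace Ωs] (μ : Measure Ωs)
    (Y : Ωs → Fin p → ℝ) : Matrix (Fin p) (Fin p) ℝ :=
  (mExp μ fun ω => msqrt (vecMulVec (Y ω - fun r => ∫ ω', Y ω' r ∂μ) (Y ω - fun r => ∫ ω', Y ω' r ∂μ))) *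
  (mExp μ fun ω => msqrt (vecMulVec (Y ω - fun r => ∫ ω', Y ω' r ∂μ) (Y ω - fun r => ∫ ω', Y ω' r ∂μ)))

section aux
variable {p : ℕ}

noncomputable def tv (x : Fin p → ℝ) : EuclideanSpace ℝ (Fin p) := WithLp.toLp 2 x
noncomputable def tm (M : Matrix (Fin p) (Fin p) ℝ) : EuclideanSpace ℝ (Fin p × Fin p) :=
  WithLp.toLp 2 (fun ij : Fin p × Fin p => M ij.1 ij.2)

lemma eunorm_eq (x : Fin p → ℝ) : eunorm x = ‖tv x‖ := by
  rw [EuclideanSpace.norm_eq, eunorm]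
  congr 1; apply Finset.sum_congr rfl; intro i _
  simp [tv, Real.norm_eq_abs, sq_abs]

lemma frob_eq (M : Matrix (Fin p) (Fin p) ℝ) : frob M = ‖tm M‖ := by
  rw [EuclideanSpace.norm_eq, frob]
  congr 1
  rw [Fintype.sum_prod_type]
  apply Finset.sum_congr rfl; intro i _
  apply Finset.sum_congr rfl; intro j _
  simp [tm, Real.norm_eq_abs, sq_abs]

lemma tm_sub (A B : Matrix (Fin p) (Fin p) ℝ) : tm (A - B) = tm A - tm B := rfl
lemma tm_smul (c : ℝ) (A : Matrix (Fin p) (Fin p) ℝ) : tm (c • A) = c • tm A := rfl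
lemma tv_sub (a b : Fin p → ℝ) : tv (a - b) = tv a - tv b := rfl

lemma tm_sum {ι : Type*} (s : Finset ι) (F : ι → Matrix (Fin p) (Fin p) ℝ) :
    tm (∑ i ∈ s, F i) = ∑ i ∈ s, tm (F i) := by
  induction s using Finset.cons_induction with
  | empty => rfl
  | cons i s hi ih => rw [Finset.sum_cons, Finset.sum_cons, ← ih]; rfl

lemma eunorm_nonneg (x : Fin p → ℝ) : 0 ≤ eunorm x := Real.sqrt_nonneg _
lemma frob_nonneg (M : Matrix (Fin p) (Fin p) ℝ) : 0 ≤ frob M := Real.sqrt_nonneg _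

lemma eunorm_sq (x : Fin p → ℝ) : eunorm x ^ 2 = ∑ i, x i ^ 2 :=
  Real.sq_sqrt (Finset.sum_nonneg fun i _ => sq_nonneg _)

lemma frob_sq (M : Matrix (Fin p) (Fin p) ℝ) : frob M ^ 2 = ∑ i, ∑ j, M i j ^ 2 :=
  Real.sq_sqrt (Finset.sum_nonneg fun i _ => Finset.sum_nonneg fun j _ => sq_nonneg _)

lemma eunorm_eq_zero {x : Fin p → ℝ} (h : eunorm x = 0) : x = 0 := by
  rw [eunorm_eq] at h
  have := norm_eq_zero.mp h
  funext i
  exact congrFun (by simpa [tv] using this : x = 0) i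

lemma abs_coord_le (x : Fin p → ℝ) (r : Fin p) : |x r| ≤ eunorm x := by
  rw [← Real.sqrt_sq_eq_abs, eunorm]
  apply Real.sqrt_le_sqrt
  exact Finset.single_le_sum (f := fun i => x i ^ 2) (fun i _ => sq_nonneg _) (Finset.mem_univ r)

lemma frob_vecMulVec (u v : Fin p → ℝ) : frob (vecMulVec u v) = eunorm u * eunorm v := by
  rw [frob, eunorm, eunorm, ← Real.sqrt_mul (Finset.sum_nonneg fun i _ => sq_nonneg _),
    Finset.sum_mul_sum]
  congr 1
  apply Finset.sum_congr rfl; intro i _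
  apply Finset.sum_congr rfl; intro j _
  rw [vecMulVec_apply]; ring

lemma frob_smul (c : ℝ) (M : Matrix (Fin p) (Fin p) ℝ) : frob (c • M) = |c| * frob M := by
  rw [frob_eq, frob_eq, tm_smul, norm_smul, Real.norm_eq_abs]

lemma frob_sub_le (A B C : Matrix (Fin p) (Fin p) ℝ) :
    frob (A - C) ≤ frob (A - B) + frob (B - C) := by
  rw [frob_eq, frob_eq, frob_eq, tm_sub, tm_sub, tm_sub]
  exact norm_sub_le_norm_sub_add_norm_sub _ _ _

lemma frob_sub_comm (A B : Matrix (Fin p) (Fin p) ℝ) : frob (A - B) = frob (B - A) := by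
  rw [frob_eq, frob_eq, tm_sub, tm_sub, norm_sub_rev]

lemma frob_sum_le {ι : Type*} (s : Finset ι) (F : ι → Matrix (Fin p) (Fin p) ℝ) :
    frob (∑ i ∈ s, F i) ≤ ∑ i ∈ s, frob (F i) := by
  rw [frob_eq, tm_sum]
  refine (norm_sum_le _ _).trans ?_
  exact le_of_eq (Finset.sum_congr rfl fun i _ => (frob_eq _).symm)

lemma eunorm_sub_eunorm_le (u v : Fin p → ℝ) : eunorm u - eunorm v ≤ eunorm (u - v) := by
  rw [eunorm_eq, eunorm_eq, eunorm_eq, tv_sub]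
  exact norm_sub_norm_le _ _

lemma eunorm_sub_comm (u v : Fin p → ℝ) : eunorm (u - v) = eunorm (v - u) := by
  rw [eunorm_eq, eunorm_eq, tv_sub, tv_sub, norm_sub_rev]

end aux

section psd
variable {p : ℕ}

open scoped MatrixOrder in
lemma msqrt_eq_of_sq {A B : Matrix (Fin p) (Fin p) ℝ} (hA : A.PosSemidef) (hB : B.PosSemidef)
    (h : B ^ 2 = A) : msqrt A = B := by
  rw [msqrt, dif_pos hA]
  have := Matrix.IsHermitian.cfc_eq hA.1 Real.sqrt
  rw [Matrix.IsHermitian.cfc, Unitary.conjStarAlgAut_apply] at this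
  rw [← this, ← cfcₙ_eq_cfc, ← CFC.sqrt_eq_real_sqrt A hA.nonneg]
  exact CFC.sqrt_unique (by rw [← h, pow_two]) hB.nonneg

lemma psd_vmv (v : Fin p → ℝ) : (vecMulVec v v).PosSemidef := by
  rw [posSemidef_iff_dotProduct_mulVec]; constructor
  · ext i j
    simp [conjTranspose_apply, vecMulVec_apply, mul_comm]
  · intro x
    have : star x ⬝ᵥ (vecMulVec v v) *ᵥ x = (∑ i, v i * x i) ^ 2 := by
      simp only [dotProduct, mulVec, vecMulVec_apply, Pi.star_apply, star_trivial]
      rw [sq, Finset.sum_mul_sum]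
      apply Finset.sum_congr rfl; intro i _
      rw [Finset.mul_sum]
      apply Finset.sum_congr rfl; intro j _
      ring
    rw [this]
    exact sq_nonneg _

lemma vmv_mul_vmv (v : Fin p → ℝ) :
    vecMulVec v v * vecMulVec v v = (∑ i, v i ^ 2) • vecMulVec v v := by
  ext i j
  simp only [Matrix.mul_apply, vecMulVec_apply, Matrix.smul_apply, smul_eq_mul]
  rw [Finset.sum_mul]
  apply Finset.sum_congr rfl; intro k _
  ring

lemma psd_smul {M : Matrix (Fin p) (Fin p) ℝ} (hM : M.PosSemidef) {c : ℝ} (hc : 0 ≤ c) :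
    (c • M).PosSemidef := by
  rw [posSemidef_iff_dotProduct_mulVec]; constructor
  · ext i j
    simp only [conjTranspose_apply, Matrix.smul_apply, star_trivial, smul_eq_mul]
    rw [← hM.1.apply i j]
    simp [conjTranspose_apply]
  · intro x
    have : star x ⬝ᵥ (c • M) *ᵥ x = c * (star x ⬝ᵥ M *ᵥ x) := by
      simp [Matrix.smul_mulVec, dotProduct_smul]
    rw [this]
    exact mul_nonneg hc (hM.dotProduct_mulVec_nonneg x)

lemma psd_sum {ι : Type*} (s : Finset ι) (F : ι → Matrix (Fin p) (Fin p) ℝ)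
    (h : ∀ i ∈ s, (F i).PosSemidef) : (∑ i ∈ s, F i).PosSemidef := by
  induction s using Finset.cons_induction with
  | empty => simpa using Matrix.PosSemidef.zero
  | cons i s hi ih =>
    rw [Finset.sum_cons]
    exact (h i (Finset.mem_cons_self i s)).add (ih fun j hj => h j (Finset.mem_cons_of_mem hj))

lemma msqrt_vmv (v : Fin p → ℝ) :
    msqrt (vecMulVec v v) = (eunorm v)⁻¹ • vecMulVec v v := by
  have hpsd := psd_vmv v
  by_cases hv : v = 0
  · subst hv
    have h0 : vecMulVec (0 : Fin p → ℝ) (0 : Fin p → ℝ) = 0 := by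
      ext i j; simp [vecMulVec_apply]
    rw [eq_comm]
    rw [show ((eunorm (0:Fin p → ℝ))⁻¹ • vecMulVec (0:Fin p → ℝ) (0:Fin p → ℝ)) = 0 by
      rw [h0]; simp]
    refine (msqrt_eq_of_sq hpsd Matrix.PosSemidef.zero ?_).symm
    rw [h0]; simp
  · have hnorm : 0 < eunorm v := by
      rcases lt_or_eq_of_le (eunorm_nonneg v) with h | h
      · exact h
      · exact absurd (eunorm_eq_zero h.symm) hv
    refine msqrt_eq_of_sq hpsd (psd_smul hpsd (inv_nonneg.mpr hnorm.le)) ?_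
    rw [pow_two, smul_mul_assoc, Matrix.mul_smul, vmv_mul_vmv, smul_smul, smul_smul]
    rw [show (∑ i, v i ^ 2) = eunorm v ^ 2 from (eunorm_sq v).symm]
    rw [show (eunorm v)⁻¹ * (eunorm v)⁻¹ * eunorm v ^ 2 = 1 by field_simp]
    rw [one_smul]

lemma msqrt_mul_self {M : Matrix (Fin p) (Fin p) ℝ} (hM : M.PosSemidef) :
    msqrt (M * M) = M := by
  have h2 : (M * M).PosSemidef := by rw [← pow_two]; exact hM.pow 2
  exact msqrt_eq_of_sq h2 hM (pow_two M)

lemma frob_fv (v : Fin p → ℝ) : frob ((eunorm v)⁻¹ • vecMulVec v v) = eunorm v := by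
  rw [frob_smul, frob_vecMulVec, abs_of_nonneg (inv_nonneg.mpr (eunorm_nonneg v))]
  by_cases hv : eunorm v = 0
  · simp [hv]
  · field_simp

lemma fv_entry_abs_le (v : Fin p → ℝ) (r s : Fin p) :
    |((eunorm v)⁻¹ • vecMulVec v v) r s| ≤ eunorm v := by
  by_cases hv : eunorm v = 0
  · have : v = 0 := eunorm_eq_zero hv
    subst this
    simp [vecMulVec_apply, hv]
  · have hnorm : 0 < eunorm v := lt_of_le_of_ne (eunorm_nonneg v) (Ne.symm hv)
    simp only [Matrix.smul_apply, vecMulVec_apply, smul_eq_mul, abs_mul, abs_inv,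
      abs_of_nonneg hnorm.le]
    rw [inv_mul_le_iff₀ hnorm]
    calc |v r| * |v s| ≤ eunorm v * eunorm v :=
          mul_le_mul (abs_coord_le v r) (abs_coord_le v s) (abs_nonneg _) (eunorm_nonneg v)
end psd

section lip
variable {p : ℕ}

lemma tm_add (A B : Matrix (Fin p) (Fin p) ℝ) : tm (A + B) = tm A + tm B := rfl

lemma frob_add_le (A B : Matrix (Fin p) (Fin p) ℝ) : frob (A + B) ≤ frob A + frob B := by
  rw [frob_eq, frob_eq, frob_eq, tm_add]; exact norm_add_le _ _

lemma lip_aux (u v : Fin p → ℝ) (hvu : eunorm v ≤ eunorm u) :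
    frob ((eunorm u)⁻¹ • vecMulVec u u - (eunorm v)⁻¹ • vecMulVec v v)
      ≤ 3 * eunorm (u - v) := by
  rcases eq_or_lt_of_le (eunorm_nonneg u) with hu0 | hu
  · -- eunorm u = 0, hence u = 0 and v = 0
    have hu' : u = 0 := eunorm_eq_zero hu0.symm
    have hv' : v = 0 := eunorm_eq_zero (le_antisymm (hu0 ▸ hvu) (eunorm_nonneg v))
    subst hu'; subst hv'
    have : ((eunorm (0:Fin p → ℝ))⁻¹ • vecMulVec (0:Fin p → ℝ) (0:Fin p → ℝ)
        - (eunorm (0:Fin p → ℝ))⁻¹ • vecMulVec (0:Fin p → ℝ) (0:Fin p → ℝ)) = 0 := by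
      simp
    rw [this]
    have : frob (0 : Matrix (Fin p) (Fin p) ℝ) = 0 := by
      simp [frob]
    rw [this]
    have := eunorm_nonneg ((0:Fin p → ℝ) - (0:Fin p → ℝ))
    linarith
  · set a := eunorm u with ha
    set b := eunorm v with hb
    have hb0 : 0 ≤ b := eunorm_nonneg v
    have hdecomp : (a⁻¹ • vecMulVec u u - b⁻¹ • vecMulVec v v)
        = a⁻¹ • (vecMulVec u (u - v) + vecMulVec (u - v) v)
          + (a⁻¹ - b⁻¹) • vecMulVec v v := by
      ext i j
      simp only [Matrix.sub_apply, Matrix.add_apply, Matrix.smul_apply, vecMulVec_apply, smul_eq_mul, Pi.sub_apply]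
      ring
    rw [hdecomp]
    have hd := eunorm_nonneg (u - v)
    have h1 : frob (a⁻¹ • (vecMulVec u (u - v) + vecMulVec (u - v) v)) ≤ 2 * eunorm (u - v) := by
      rw [frob_smul, abs_of_nonneg (inv_nonneg.mpr hu.le)]
      have := (frob_add_le (vecMulVec u (u - v)) (vecMulVec (u - v) v))
      rw [frob_vecMulVec, frob_vecMulVec] at this
      calc a⁻¹ * frob (vecMulVec u (u - v) + vecMulVec (u - v) v)
          ≤ a⁻¹ * (a * eunorm (u - v) + eunorm (u - v) * b) := by
            apply mul_le_mul_of_nonneg_left _ (inv_nonneg.mpr hu.le)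
            exact this
        _ ≤ 2 * eunorm (u - v) := by
            rw [inv_mul_le_iff₀ hu]
            nlinarith
    have h2 : frob ((a⁻¹ - b⁻¹) • vecMulVec v v) ≤ eunorm (u - v) := by
      rw [frob_smul, frob_vecMulVec, ← hb]
      rcases eq_or_lt_of_le hb0 with hb0' | hbpos
      · rw [← hb0']; simpa using hd
      · have habs : |a⁻¹ - b⁻¹| = b⁻¹ - a⁻¹ := by
          rw [abs_sub_comm, abs_of_nonneg]
          have := inv_anti₀ hbpos hvu
          linarith
        rw [habs]
        have hkey : (b⁻¹ - a⁻¹) * (b * b) = (a - b) * b / a := by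
          field_simp
        have hab : a - b ≤ eunorm (u - v) := by
          have := eunorm_sub_eunorm_le u v; linarith
        calc (b⁻¹ - a⁻¹) * (b * b) = (a - b) * b / a := hkey
          _ ≤ (a - b) := by
              rw [div_le_iff₀ hu]
              nlinarith
          _ ≤ eunorm (u - v) := hab
    calc frob _ ≤ frob (a⁻¹ • (vecMulVec u (u - v) + vecMulVec (u - v) v))
          + frob ((a⁻¹ - b⁻¹) • vecMulVec v v) := frob_add_le _ _
      _ ≤ 2 * eunorm (u - v) + eunorm (u - v) := add_le_add h1 h2
      _ = 3 * eunorm (u - v) := by ring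

lemma lip (u v : Fin p → ℝ) :
    frob ((eunorm u)⁻¹ • vecMulVec u u - (eunorm v)⁻¹ • vecMulVec v v)
      ≤ 3 * eunorm (u - v) := by
  rcases le_total (eunorm v) (eunorm u) with h | h
  · exact lip_aux u v h
  · rw [frob_sub_comm, eunorm_sub_comm]
    exact lip_aux v u h

end lip

section prob
variable {Ω : Type*} [MeasurableSpace Ω] {μ : Measure Ω} [IsProbabilityMeasure μ]

lemma integrable_of_sq {g : Ω → ℝ} (hm : AEStronglyMeasurable g μ)
    (h2 : Integrable (fun ω => g ω ^ 2) μ) : Integrable g μ := by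
  refine Integrable.mono' ((h2.add (integrable_const 1)).const_mul (1/2)) hm ?_
  filter_upwards with ω
  simp only [Pi.add_apply, Real.norm_eq_abs]
  nlinarith [sq_nonneg (|g ω| - 1), sq_abs (g ω)]

lemma esq {g : Ω → ℝ} (hg0 : ∀ ω, 0 ≤ g ω) (hm : AEStronglyMeasurable g μ)
    (h2 : Integrable (fun ω => g ω ^ 2) μ) :
    Integrable g μ ∧ ∫ ω, g ω ∂μ ≤ Real.sqrt (∫ ω, g ω ^ 2 ∂μ) := by
  have hint : Integrable g μ := integrable_of_sq hm h2
  refine ⟨hint, ?_⟩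
  set t := ∫ ω, g ω ∂μ with ht
  have ht0 : 0 ≤ t := integral_nonneg hg0
  have hexp : ∫ ω, (g ω - t) ^ 2 ∂μ = (∫ ω, g ω ^ 2 ∂μ) - t ^ 2 := by
    have e1 : ∀ ω, (g ω - t) ^ 2 = (g ω ^ 2 - (2 * t) * g ω) + t ^ 2 := by intro ω; ring
    simp_rw [e1]
    have hA : Integrable (fun ω => g ω ^ 2 - 2 * t * g ω) μ := h2.sub (hint.const_mul (2*t))
    have hB : Integrable (fun ω => (2 * t) * g ω) μ := hint.const_mul (2*t)
    rw [integral_add hA (integrable_const _), integral_sub h2 hB, integral_const_mul,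
      integral_const]
    simp [← ht]
    ring
  have hpos : 0 ≤ ∫ ω, (g ω - t) ^ 2 ∂μ := integral_nonneg fun ω => sq_nonneg _
  have ht2 : t ^ 2 ≤ ∫ ω, g ω ^ 2 ∂μ := by linarith
  calc t = Real.sqrt (t ^ 2) := (Real.sqrt_sq ht0).symm
    _ ≤ Real.sqrt (∫ ω, g ω ^ 2 ∂μ) := Real.sqrt_le_sqrt ht2

lemma integral_sum_sq {n : ℕ} (W : Fin n → Ω → ℝ)
    (h1 : ∀ i, Integrable (W i) μ)
    (h2 : ∀ i, Integrable (fun ω => W i ω ^ 2) μ)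
    (hind : ∀ i j, i ≠ j → IndepFun (W i) (W j) μ)
    (h0 : ∀ i, ∫ ω, W i ω ∂μ = 0) :
    ∫ ω, (∑ i, W i ω) ^ 2 ∂μ = ∑ i, ∫ ω, W i ω ^ 2 ∂μ := by
  have hprod : ∀ i j, Integrable (fun ω => W i ω * W j ω) μ := by
    intro i j
    by_cases h : i = j
    · subst h; simpa [pow_two] using h2 i
    · exact (hind i j h).integrable_mul (h1 i) (h1 j)
  have e1 : ∀ ω, (∑ i, W i ω) ^ 2 = ∑ i, ∑ j, W i ω * W j ω := by
    intro ω; rw [sq, Finset.sum_mul_sum]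
  simp_rw [e1]
  rw [integral_finset_sum _ (fun i _ => integrable_finset_sum _ (fun j _ => hprod i j))]
  apply Finset.sum_congr rfl
  intro i _
  rw [integral_finset_sum _ (fun j _ => hprod i j)]
  rw [Finset.sum_eq_single i]
  · congr 1; funext ω; rw [pow_two]
  · intro j _ hji
    have := (hind i j (Ne.symm hji)).integral_fun_mul_eq_mul_integral (h1 i).1 (h1 j).1
    rw [this, h0 i, h0 j, mul_zero]
  · intro h; exact absurd (Finset.mem_univ i) h

lemma main_bound {n : ℕ} (hn : 0 < n) {κ : Type*} [Fintype κ]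
    (W : Fin n → Ω → κ → ℝ) (V : ℝ)
    (hm : ∀ i r, AEStronglyMeasurable (fun ω => W i ω r) μ)
    (h2 : ∀ i r, Integrable (fun ω => W i ω r ^ 2) μ)
    (hind : ∀ i j, i ≠ j → ∀ r, IndepFun (fun ω => W i ω r) (fun ω => W j ω r) μ)
    (h0 : ∀ i r, ∫ ω, W i ω r ∂μ = 0)
    (hV : ∀ i, ∫ ω, ∑ r, W i ω r ^ 2 ∂μ ≤ V) :
    Integrable (fun ω => Real.sqrt (∑ r, ((n:ℝ)⁻¹ * ∑ i, W i ω r) ^ 2)) μ ∧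
      ∫ ω, Real.sqrt (∑ r, ((n:ℝ)⁻¹ * ∑ i, W i ω r) ^ 2) ∂μ ≤ Real.sqrt (V / n) := by
  have hnR : (0:ℝ) < n := Nat.cast_pos.mpr hn
  set g : Ω → ℝ := fun ω => Real.sqrt (∑ r, ((n:ℝ)⁻¹ * ∑ i, W i ω r) ^ 2) with hg
  have hg0 : ∀ ω, 0 ≤ g ω := fun ω => Real.sqrt_nonneg _
  have hgsq : ∀ ω, g ω ^ 2 = ∑ r, ((n:ℝ)⁻¹ * ∑ i, W i ω r) ^ 2 := fun ω =>
    Real.sq_sqrt (Finset.sum_nonneg fun r _ => sq_nonneg _)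
  -- measurability
  have hsum_m : ∀ r, AEStronglyMeasurable (fun ω => ∑ i, W i ω r) μ := fun r =>
    Finset.aestronglyMeasurable_fun_sum _ fun i _ => hm i r
  have hgm : AEStronglyMeasurable g μ := by
    apply Real.continuous_sqrt.comp_aestronglyMeasurable
    exact Finset.aestronglyMeasurable_fun_sum _ fun r _ => ((hsum_m r).const_mul _).pow _
  -- pointwise bound for g^2
  have hbound : ∀ ω, ∑ r, ((n:ℝ)⁻¹ * ∑ i, W i ω r) ^ 2 ≤ ∑ i, ∑ r, W i ω r ^ 2 := by
    intro ω
    rw [Finset.sum_comm]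
    apply Finset.sum_le_sum
    intro r _
    have hcs : (∑ i, W i ω r) ^ 2 ≤ (n:ℝ) * ∑ i, W i ω r ^ 2 := by
      have := sq_sum_le_card_mul_sum_sq (s := Finset.univ) (f := fun i => W i ω r)
      simpa using this
    have : ((n:ℝ)⁻¹ * ∑ i, W i ω r) ^ 2 = (n:ℝ)⁻¹ ^ 2 * (∑ i, W i ω r) ^ 2 := by ring
    rw [this]
    calc (n:ℝ)⁻¹ ^ 2 * (∑ i, W i ω r) ^ 2 ≤ (n:ℝ)⁻¹ ^ 2 * ((n:ℝ) * ∑ i, W i ω r ^ 2) := by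
          apply mul_le_mul_of_nonneg_left hcs (by positivity)
      _ = (n:ℝ)⁻¹ * ∑ i, W i ω r ^ 2 := by field_simp
      _ ≤ ∑ i, W i ω r ^ 2 := by
          apply mul_le_of_le_one_left (Finset.sum_nonneg fun i _ => sq_nonneg _)
          rw [inv_le_one_iff₀]
          right; exact_mod_cast hn
  have hGint : Integrable (fun ω => ∑ i, ∑ r, W i ω r ^ 2) μ :=
    integrable_finset_sum _ fun i _ => integrable_finset_sum _ fun r _ => h2 i r
  have h2g : Integrable (fun ω => g ω ^ 2) μ := by
    refine Integrable.mono' hGint ?_ ?_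
    · exact hgm.pow _
    · filter_upwards with ω
      rw [Real.norm_eq_abs, hgsq, abs_of_nonneg (Finset.sum_nonneg fun r _ => sq_nonneg _)]
      exact hbound ω
  obtain ⟨hint, hle⟩ := esq hg0 hgm h2g
  refine ⟨hint, hle.trans ?_⟩
  apply Real.sqrt_le_sqrt
  -- value of ∫ g^2
  have hWint : ∀ i r, Integrable (fun ω => W i ω r) μ := fun i r =>
    integrable_of_sq (hm i r) (h2 i r)
  have hsq_int : ∀ r, Integrable (fun ω => ((n:ℝ)⁻¹ * ∑ i, W i ω r) ^ 2) μ := by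
    intro r
    have e : ∀ ω, ((n:ℝ)⁻¹ * ∑ i, W i ω r) ^ 2 = (n:ℝ)⁻¹ ^ 2 * (∑ i, W i ω r) ^ 2 := by
      intro ω; ring
    simp_rw [e]
    apply Integrable.const_mul
    -- (∑ i, W i ω r)^2 expands into sum of products
    have e1 : ∀ ω, (∑ i, W i ω r) ^ 2 = ∑ i, ∑ j, W i ω r * W j ω r := by
      intro ω; rw [sq, Finset.sum_mul_sum]
    simp_rw [e1]
    apply integrable_finset_sum _ fun i _ => integrable_finset_sum _ fun j _ => ?_
    by_cases h : i = j
    · subst h; simpa [pow_two] using h2 i r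
    · exact ((hind i j h r).integrable_mul (hWint i r) (hWint j r))
  have hval : ∫ ω, g ω ^ 2 ∂μ ≤ V / n := by
    simp_rw [hgsq]
    rw [integral_finset_sum _ fun r _ => hsq_int r]
    have hper : ∀ r : κ, ∫ ω, ((n:ℝ)⁻¹ * ∑ i, W i ω r) ^ 2 ∂μ
        = (n:ℝ)⁻¹ ^ 2 * ∑ i, ∫ ω, W i ω r ^ 2 ∂μ := by
      intro r
      have e : ∀ ω, ((n:ℝ)⁻¹ * ∑ i, W i ω r) ^ 2 = (n:ℝ)⁻¹ ^ 2 * (∑ i, W i ω r) ^ 2 := by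
        intro ω; ring
      simp_rw [e]
      rw [integral_const_mul]
      congr 1
      exact integral_sum_sq (fun i => (fun ω => W i ω r)) (fun i => hWint i r)
        (fun i => h2 i r) (fun i j hij => hind i j hij r) (fun i => h0 i r)
    simp_rw [hper]
    rw [← Finset.mul_sum, Finset.sum_comm]
    have : ∑ i : Fin n, ∑ r, ∫ ω, W i ω r ^ 2 ∂μ ≤ (n:ℝ) * V := by
      have hterm : ∀ i : Fin n, ∑ r, ∫ ω, W i ω r ^ 2 ∂μ ≤ V := by
        intro i
        rw [← integral_finset_sum _ fun r _ => h2 i r]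
        exact hV i
      calc ∑ i : Fin n, ∑ r, ∫ ω, W i ω r ^ 2 ∂μ ≤ ∑ i : Fin n, V :=
            Finset.sum_le_sum fun i _ => hterm i
        _ = (n:ℝ) * V := by simp [mul_comm]
    calc (n:ℝ)⁻¹ ^ 2 * ∑ i : Fin n, ∑ r, ∫ ω, W i ω r ^ 2 ∂μ
        ≤ (n:ℝ)⁻¹ ^ 2 * ((n:ℝ) * V) := by
          apply mul_le_mul_of_nonneg_left this (by positivity)
      _ = V / n := by field_simp
  exact hval

end prob

section more
variable {p : ℕ}

lemma eunorm_sub_le (a b : Fin p → ℝ) : eunorm (a - b) ≤ eunorm a + eunorm b := by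
  rw [eunorm_eq, eunorm_eq, eunorm_eq, tv_sub]; exact norm_sub_le _ _

lemma meas_eunorm {Ω : Type*} [MeasurableSpace Ω] {h : Ω → Fin p → ℝ}
    (hh : ∀ r, Measurable fun ω => h ω r) : Measurable fun ω => eunorm (h ω) := by
  unfold eunorm
  exact Real.continuous_sqrt.measurable.comp
    (Finset.measurable_sum _ fun r _ => (hh r).pow_const 2)

lemma fv_frob_sq (v : Fin p → ℝ) :
    ∑ q : Fin p × Fin p, (((eunorm v)⁻¹ • vecMulVec v v) q.1 q.2) ^ 2 = eunorm v ^ 2 := by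
  have := frob_sq ((eunorm v)⁻¹ • vecMulVec v v)
  rw [frob_fv] at this
  rw [Fintype.sum_prod_type]
  exact this.symm ▸ rfl

end more

section prob2
variable {Ω : Type*} [MeasurableSpace Ω] {μ : Measure Ω} [IsProbabilityMeasure μ]

lemma integral_centered_sq_le {h : Ω → ℝ} (h1 : Integrable h μ)
    (h2 : Integrable (fun ω => h ω ^ 2) μ) :
    ∫ ω, (h ω - ∫ x, h x ∂μ) ^ 2 ∂μ ≤ ∫ ω, h ω ^ 2 ∂μ := by
  set t := ∫ x, h x ∂μ with ht
  have e1 : ∀ ω, (h ω - t) ^ 2 = (h ω ^ 2 - (2 * t) * h ω) + t ^ 2 := by intro ω; ring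
  simp_rw [e1]
  have hA : Integrable (fun ω => h ω ^ 2 - 2 * t * h ω) μ := h2.sub (h1.const_mul (2*t))
  rw [integral_add hA (integrable_const _), integral_sub h2 (h1.const_mul (2*t)),
    integral_const_mul, integral_const]
  simp [← ht]
  nlinarith [sq_nonneg t]

end prob2

section fmat
variable {p : ℕ}

noncomputable def fmat (v : Fin p → ℝ) : Matrix (Fin p) (Fin p) ℝ :=
  (eunorm v)⁻¹ • vecMulVec v v

lemma msqrt_vmv' (v : Fin p → ℝ) : msqrt (vecMulVec v v) = fmat v := msqrt_vmv v
lemma fmat_lip (u v : Fin p → ℝ) : frob (fmat u - fmat v) ≤ 3 * eunorm (u - v) := lip u v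
lemma fmat_frob (v : Fin p → ℝ) : frob (fmat v) = eunorm v := frob_fv v
lemma fmat_abs_le (v : Fin p → ℝ) (r s : Fin p) : |fmat v r s| ≤ eunorm v := fv_entry_abs_le v r s
lemma fmat_psd (v : Fin p → ℝ) : (fmat v).PosSemidef :=
  psd_smul (psd_vmv v) (inv_nonneg.mpr (eunorm_nonneg v))
lemma fmat_sum_sq (v : Fin p → ℝ) :
    ∑ q : Fin p × Fin p, (fmat v q.1 q.2) ^ 2 = eunorm v ^ 2 := fv_frob_sq v
lemma fmat_apply (v : Fin p → ℝ) (r s : Fin p) :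
    fmat v r s = (eunorm v)⁻¹ * (v r * v s) := by
  simp [fmat, vecMulVec_apply]
lemma fmat_symm (v : Fin p → ℝ) (r s : Fin p) : fmat v r s = fmat v s r := by
  rw [fmat_apply, fmat_apply]; ring
lemma fmat_coord_sq_le (v : Fin p → ℝ) (r : Fin p) : v r ^ 2 ≤ eunorm v ^ 2 := by
  rw [← sq_abs (v r)]
  exact pow_le_pow_left₀ (abs_nonneg _) (abs_coord_le v r) 2

end fmat

/-- For each dimension `p ≥ 1` there exists a finite constant `κ_p` such that for
any i.i.d. sample `Y₁, …, Yₙ` of a random vector `Y ∈ ℝ^p` with mean `μ` and `E‖Y‖² < ∞`, the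
sample `d_S`-covariance `Ω̆` (computed with the sample mean `Ȳ`) satisfies
`E[d_S(Ω̆, cov_{d_S}(Y))] ≤ κ_p √(E‖Y − μ‖² / n)`. -/
theorem stmt9 (p : ℕ) (hp : 1 ≤ p) :
    ∃ κ : ℝ, 0 ≤ κ ∧
      ∀ (Ωs : Type) [MeasurableSpace Ωs] (μ : Measure Ωs) [IsProbabilityMeasure μ]
        (n : ℕ) (hn : 0 < n) (Y : Fin n → Ωs → Fin p → ℝ),
        (∀ i, Measurable (Y i)) →
        iIndepFun Y μ →
        (∀ i j, IdentDistrib (Y i) (Y j) μ μ) →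
        Integrable (fun ω => eunorm (Y ⟨0, hn⟩ ω) ^ 2) μ →
        ∀ μv : Fin p → ℝ, μv = (fun r => ∫ ω, Y ⟨0, hn⟩ ω r ∂μ) →
        (∫ ω, dS
            (((n : ℝ)⁻¹ • ∑ i, msqrt (vecMulVec
                (Y i ω - (n : ℝ)⁻¹ • ∑ j, Y j ω) (Y i ω - (n : ℝ)⁻¹ • ∑ j, Y j ω))) *
             ((n : ℝ)⁻¹ • ∑ i, msqrt (vecMulVec
                (Y i ω - (n : ℝ)⁻¹ • ∑ j, Y j ω) (Y i ω - (n : ℝ)⁻¹ • ∑ j, Y j ω))))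
            (covDS μ (Y ⟨0, hn⟩)) ∂μ) ≤
          κ * Real.sqrt ((∫ ω, eunorm (Y ⟨0, hn⟩ ω - μv) ^ 2 ∂μ) / n) := by
  refine ⟨4, by norm_num, ?_⟩
  intro Ωs _inst μ _instP n hn Y hYmeas hYindep hYid hYint μv hμv
  set i0 : Fin n := ⟨0, hn⟩ with hi0def
  have hnR : (0:ℝ) < n := Nat.cast_pos.mpr hn
  have hninv : (n:ℝ)⁻¹ * n = 1 := inv_mul_cancel₀ hnR.ne'
  -- measurability of coordinates
  have hYc : ∀ i r, Measurable fun ω => Y i ω r := fun i r =>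
    (measurable_pi_apply r).comp (hYmeas i)
  have hXc : ∀ i r, Measurable fun ω => Y i ω r - μv r := fun i r =>
    (hYc i r).sub measurable_const
  have hXm : ∀ i r, Measurable fun ω => (Y i ω - μv) r := by
    intro i r; simpa [Pi.sub_apply] using hXc i r
  have hEuX : ∀ i, Measurable fun ω => eunorm (Y i ω - μv) := fun i =>
    meas_eunorm (hXm i)
  -- integrability of eunorm (Y i - μv) ^ 2
  have hsec0 : Integrable (fun ω => eunorm (Y i0 ω - μv) ^ 2) μ := by
    refine Integrable.mono' ((hYint.const_mul 2).add (integrable_const (2 * eunorm μv ^ 2)))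
      ((hEuX i0).pow_const 2).aestronglyMeasurable ?_
    filter_upwards with ω
    simp only [Pi.add_apply]
    rw [Real.norm_eq_abs, abs_of_nonneg (by positivity)]
    have h1 : eunorm (Y i0 ω - μv) ≤ eunorm (Y i0 ω) + eunorm μv := eunorm_sub_le _ _
    have h2 : eunorm (Y i0 ω - μv) ^ 2 ≤ (eunorm (Y i0 ω) + eunorm μv) ^ 2 :=
      pow_le_pow_left₀ (eunorm_nonneg _) h1 2
    nlinarith [sq_nonneg (eunorm (Y i0 ω) - eunorm μv)]
  -- identically-distributed transfer for the function v ↦ eunorm (v - μv) ^ 2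
  have hgid : ∀ i, IdentDistrib (fun ω => eunorm (Y i ω - μv) ^ 2)
      (fun ω => eunorm (Y i0 ω - μv) ^ 2) μ μ := by
    intro i
    have hgm : Measurable fun v : Fin p → ℝ => eunorm (v - μv) ^ 2 :=
      (meas_eunorm (fun r => by
        exact (measurable_pi_apply r).sub
          (measurable_const : Measurable fun _ : Fin p → ℝ => μv r))).pow_const 2
    exact (hYid i i0).comp hgm
  have hsec : ∀ i, Integrable (fun ω => eunorm (Y i ω - μv) ^ 2) μ := fun i =>
    (hgid i).integrable_iff.mpr hsec0
  set V := ∫ ω, eunorm (Y i0 ω - μv) ^ 2 ∂μ with hVdef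
  have hsecV : ∀ i, ∫ ω, eunorm (Y i ω - μv) ^ 2 ∂μ = V := fun i => (hgid i).integral_eq
  have hEuInt : ∀ i, Integrable (fun ω => eunorm (Y i ω - μv)) μ := fun i =>
    integrable_of_sq (hEuX i).aestronglyMeasurable (hsec i)
  -- coordinate integrability and means
  have hXInt : ∀ i r, Integrable (fun ω => Y i ω r - μv r) μ := by
    intro i r
    refine Integrable.mono' (hEuInt i) (hXc i r).aestronglyMeasurable ?_
    filter_upwards with ω
    rw [Real.norm_eq_abs]
    have := abs_coord_le (Y i ω - μv) r
    simpa [Pi.sub_apply] using this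
  have hcoordInt : ∀ i r, Integrable (fun ω => Y i ω r) μ := by
    intro i r
    have : (fun ω => Y i ω r) = fun ω => (Y i ω r - μv r) + μv r := by funext ω; ring
    rw [this]
    exact (hXInt i r).add (integrable_const _)
  have hcoordMean : ∀ i r, ∫ ω, Y i ω r ∂μ = μv r := by
    intro i r
    have hid : IdentDistrib (fun ω => Y i ω r) (fun ω => Y i0 ω r) μ μ :=
      (hYid i i0).comp (measurable_pi_apply r)
    rw [hid.integral_eq]
    conv_rhs => rw [hμv]
  have hXmean : ∀ i r, ∫ ω, (Y i ω r - μv r) ∂μ = 0 := by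
    intro i r
    rw [integral_sub (hcoordInt i r) (integrable_const _), hcoordMean, integral_const]
    simp
  -- square-integrability of coordinates
  have hXsqInt : ∀ i r, Integrable (fun ω => (Y i ω r - μv r) ^ 2) μ := by
    intro i r
    refine Integrable.mono' (hsec i) ((hXc i r).pow_const 2).aestronglyMeasurable ?_
    filter_upwards with ω
    rw [Real.norm_eq_abs, abs_of_nonneg (sq_nonneg _)]
    have := fmat_coord_sq_le (Y i ω - μv) r
    simpa [Pi.sub_apply] using this
  -- MAIN bound (a): the sample mean
  obtain ⟨hint1, hbd1⟩ := main_bound (μ := μ) hn (fun i ω r => Y i ω r - μv r) V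
    (fun i r => (hXc i r).aestronglyMeasurable)
    (fun i r => hXsqInt i r)
    (fun i j hij r => (hYindep.indepFun hij).comp
      ((measurable_pi_apply r).sub measurable_const)
      ((measurable_pi_apply r).sub measurable_const))
    hXmean
    (by
      intro i
      refine le_of_eq ?_
      rw [← hsecV i]
      apply integral_congr_ae
      filter_upwards with ω
      rw [eunorm_sq]
      exact Finset.sum_congr rfl fun r _ => by simp [Pi.sub_apply])
  have hg1eq : (fun ω => Real.sqrt (∑ r, ((n:ℝ)⁻¹ * ∑ i, (Y i ω r - μv r)) ^ 2))
      = fun ω => eunorm ((n:ℝ)⁻¹ • ∑ j, Y j ω - μv) := by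
    funext ω
    rw [eunorm]
    congr 1
    apply Finset.sum_congr rfl
    intro r _
    congr 1
    simp only [Pi.sub_apply, Pi.smul_apply, smul_eq_mul, Finset.sum_apply,
      Finset.sum_sub_distrib, Finset.sum_const, Finset.card_univ, Fintype.card_fin,
      nsmul_eq_mul, mul_sub]
    rw [← mul_assoc, hninv, one_mul]
  rw [hg1eq] at hint1 hbd1
  -- the limiting matrix N
  set N : Matrix (Fin p) (Fin p) ℝ :=
    Matrix.of fun r s => ∫ ω, fmat (Y i0 ω - μv) r s ∂μ with hNdef
  have hNentry : ∀ r s, N r s = ∫ ω, fmat (Y i0 ω - μv) r s ∂μ := fun r s => rfl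
  have hFm : ∀ i r s, Measurable fun ω => fmat (Y i ω - μv) r s := by
    intro i r s
    simp only [fmat_apply]
    exact ((hEuX i).inv).mul ((hXm i r).mul (hXm i s))
  have hFint : ∀ i r s, Integrable (fun ω => fmat (Y i ω - μv) r s) μ := by
    intro i r s
    refine Integrable.mono' (hEuInt i) (hFm i r s).aestronglyMeasurable ?_
    filter_upwards with ω
    rw [Real.norm_eq_abs]
    exact fmat_abs_le _ r s
  have hFsqInt : ∀ i r s, Integrable (fun ω => fmat (Y i ω - μv) r s ^ 2) μ := by
    intro i r s
    refine Integrable.mono' (hsec i) ((hFm i r s).pow_const 2).aestronglyMeasurable ?_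
    filter_upwards with ω
    rw [Real.norm_eq_abs, abs_of_nonneg (sq_nonneg _), ← sq_abs]
    exact pow_le_pow_left₀ (abs_nonneg _) (fmat_abs_le _ r s) 2
  have hGm : ∀ r s, Measurable fun v : Fin p → ℝ => fmat (v - μv) r s := by
    intro r s
    simp only [fmat_apply, Pi.sub_apply]
    refine Measurable.mul (Measurable.inv (meas_eunorm fun t => ?_)) (Measurable.mul ?_ ?_)
    · exact
        (measurable_pi_apply t).sub (measurable_const : Measurable fun _ : Fin p → ℝ => μv t)
    · exact (measurable_pi_apply r).sub measurable_const
    · exact (measurable_pi_apply s).sub measurable_const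
  have hFid : ∀ i r s, ∫ ω, fmat (Y i ω - μv) r s ∂μ = N r s := by
    intro i r s
    rw [hNentry]
    exact ((hYid i i0).comp (hGm r s)).integral_eq
  have hW2sq : ∀ (i) (q : Fin p × Fin p),
      Integrable (fun ω => (fmat (Y i ω - μv) q.1 q.2 - N q.1 q.2) ^ 2) μ := by
    intro i q
    refine Integrable.mono' (((hsec i).const_mul 2).add (integrable_const (2 * N q.1 q.2 ^ 2)))
      (((hFm i q.1 q.2).sub measurable_const).pow_const 2).aestronglyMeasurable ?_
    filter_upwards with ω
    simp only [Pi.add_apply]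
    rw [Real.norm_eq_abs, abs_of_nonneg (sq_nonneg _)]
    have h1 : |fmat (Y i ω - μv) q.1 q.2| ≤ eunorm (Y i ω - μv) := fmat_abs_le _ _ _
    have h2 : fmat (Y i ω - μv) q.1 q.2 ^ 2 ≤ eunorm (Y i ω - μv) ^ 2 := by
      rw [← sq_abs]
      exact pow_le_pow_left₀ (abs_nonneg _) h1 2
    nlinarith [sq_nonneg (fmat (Y i ω - μv) q.1 q.2 + N q.1 q.2)]
  have hVbound : ∀ i, ∫ ω, ∑ q : Fin p × Fin p,
      (fmat (Y i ω - μv) q.1 q.2 - N q.1 q.2) ^ 2 ∂μ ≤ V := by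
    intro i
    rw [integral_finset_sum _ fun q _ => hW2sq i q]
    have hq : ∀ q : Fin p × Fin p,
        ∫ ω, (fmat (Y i ω - μv) q.1 q.2 - N q.1 q.2) ^ 2 ∂μ
          ≤ ∫ ω, fmat (Y i ω - μv) q.1 q.2 ^ 2 ∂μ := by
      intro q
      have h := integral_centered_sq_le (hFint i q.1 q.2) (hFsqInt i q.1 q.2)
      rwa [hFid i q.1 q.2] at h
    calc ∑ q : Fin p × Fin p, ∫ ω, (fmat (Y i ω - μv) q.1 q.2 - N q.1 q.2) ^ 2 ∂μ
        ≤ ∑ q : Fin p × Fin p, ∫ ω, fmat (Y i ω - μv) q.1 q.2 ^ 2 ∂μ :=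
          Finset.sum_le_sum fun q _ => hq q
      _ = ∫ ω, ∑ q : Fin p × Fin p, fmat (Y i ω - μv) q.1 q.2 ^ 2 ∂μ :=
          (integral_finset_sum _ fun q _ => hFsqInt i q.1 q.2).symm
      _ = ∫ ω, eunorm (Y i ω - μv) ^ 2 ∂μ :=
          integral_congr_ae (Filter.Eventually.of_forall fun ω => fmat_sum_sq _)
      _ = V := hsecV i
  obtain ⟨hint2, hbd2⟩ := main_bound (μ := μ) hn (κ := Fin p × Fin p)
    (fun i ω q => fmat (Y i ω - μv) q.1 q.2 - N q.1 q.2) V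
    (fun i q => ((hFm i q.1 q.2).sub measurable_const).aestronglyMeasurable)
    (fun i q => hW2sq i q)
    (fun i j hij q => (hYindep.indepFun hij).comp
      ((hGm q.1 q.2).sub measurable_const) ((hGm q.1 q.2).sub measurable_const))
    (fun i q => by
      rw [integral_sub (hFint i q.1 q.2) (integrable_const _), hFid, integral_const]
      simp)
    hVbound
  have hg2eq : (fun ω => Real.sqrt (∑ q : Fin p × Fin p,
        ((n:ℝ)⁻¹ * ∑ i, (fmat (Y i ω - μv) q.1 q.2 - N q.1 q.2)) ^ 2))
      = fun ω => frob ((n:ℝ)⁻¹ • ∑ i, fmat (Y i ω - μv) - N) := by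
    funext ω
    rw [frob]
    congr 1
    rw [Fintype.sum_prod_type]
    apply Finset.sum_congr rfl
    intro r _
    apply Finset.sum_congr rfl
    intro s _
    congr 1
    simp only [Matrix.sub_apply, Matrix.smul_apply, smul_eq_mul, Matrix.sum_apply,
      Finset.sum_sub_distrib, Finset.sum_const, Finset.card_univ, Fintype.card_fin,
      nsmul_eq_mul, mul_sub]
    rw [← mul_assoc, hninv, one_mul]
  rw [hg2eq] at hint2 hbd2
  -- N is positive semidefinite
  have hNpsd : N.PosSemidef := by
    rw [posSemidef_iff_dotProduct_mulVec]; constructor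
    · ext r s
      simp only [conjTranspose_apply, star_trivial]
      rw [hNentry, hNentry]
      exact integral_congr_ae (Filter.Eventually.of_forall fun ω => fmat_symm _ s r)
    · intro x
      have hx : star x ⬝ᵥ N *ᵥ x
          = ∫ ω, star x ⬝ᵥ (fmat (Y i0 ω - μv)) *ᵥ x ∂μ := by
        simp only [dotProduct, mulVec, star_trivial]
        have hrow : ∀ r, (∑ s, N r s * x s)
            = ∫ ω, ∑ s, fmat (Y i0 ω - μv) r s * x s ∂μ := by
          intro r
          rw [integral_finset_sum _ fun s _ => (hFint i0 r s).mul_const (x s)]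
          refine Finset.sum_congr rfl fun s _ => ?_
          rw [hNentry, ← integral_mul_const]
        calc ∑ r, x r * ∑ s, N r s * x s
            = ∑ r, ∫ ω, x r * ∑ s, fmat (Y i0 ω - μv) r s * x s ∂μ := by
              refine Finset.sum_congr rfl fun r _ => ?_
              rw [hrow r, integral_const_mul]
          _ = ∫ ω, ∑ r, x r * ∑ s, fmat (Y i0 ω - μv) r s * x s ∂μ := by
              rw [integral_finset_sum _ fun r _ => Integrable.const_mul
                (integrable_finset_sum _ fun s _ => (hFint i0 r s).mul_const (x s)) (x r)]
      rw [hx]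
      refine integral_nonneg fun ω => ?_
      exact (fmat_psd (Y i0 ω - μv)).dotProduct_mulVec_nonneg x
  -- rewrite covDS
  have hcov : covDS μ (Y i0) = N * N := by
    have hm : (mExp μ fun ω => msqrt (vecMulVec (Y i0 ω - fun r => ∫ ω', Y i0 ω' r ∂μ)
        (Y i0 ω - fun r => ∫ ω', Y i0 ω' r ∂μ))) = N := by
      rw [← hμv]
      ext r s
      simp only [mExp, Matrix.of_apply]
      rw [hNentry]
      exact integral_congr_ae (Filter.Eventually.of_forall fun ω => by simp [msqrt_vmv'])
    unfold covDS
    rw [hm]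
  -- pointwise domination
  have hdom : ∀ ω, dS
      (((n : ℝ)⁻¹ • ∑ i, msqrt (vecMulVec
          (Y i ω - (n : ℝ)⁻¹ • ∑ j, Y j ω) (Y i ω - (n : ℝ)⁻¹ • ∑ j, Y j ω))) *
       ((n : ℝ)⁻¹ • ∑ i, msqrt (vecMulVec
          (Y i ω - (n : ℝ)⁻¹ • ∑ j, Y j ω) (Y i ω - (n : ℝ)⁻¹ • ∑ j, Y j ω))))
      (covDS μ (Y i0))
      ≤ 3 * eunorm ((n:ℝ)⁻¹ • ∑ j, Y j ω - μv)
        + frob ((n:ℝ)⁻¹ • ∑ i, fmat (Y i ω - μv) - N) := by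
    intro ω
    rw [hcov]
    simp only [dS, msqrt_vmv']
    have hMw : ((n:ℝ)⁻¹ • ∑ i, fmat (Y i ω - (n:ℝ)⁻¹ • ∑ j, Y j ω)).PosSemidef :=
      psd_smul (psd_sum _ _ fun i _ => fmat_psd _) (inv_nonneg.mpr hnR.le)
    rw [msqrt_mul_self hMw, msqrt_mul_self hNpsd]
    refine (frob_sub_le _ ((n:ℝ)⁻¹ • ∑ i, fmat (Y i ω - μv)) N).trans
      (add_le_add ?_ le_rfl)
    have hMA : ((n:ℝ)⁻¹ • ∑ i, fmat (Y i ω - (n:ℝ)⁻¹ • ∑ j, Y j ω))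
        - ((n:ℝ)⁻¹ • ∑ i, fmat (Y i ω - μv))
        = (n:ℝ)⁻¹ • ∑ i, (fmat (Y i ω - (n:ℝ)⁻¹ • ∑ j, Y j ω) - fmat (Y i ω - μv)) := by
      rw [Finset.sum_sub_distrib, smul_sub]
    rw [hMA, frob_smul, abs_of_nonneg (inv_nonneg.mpr hnR.le)]
    have hterm : ∀ i : Fin n, frob (fmat (Y i ω - (n:ℝ)⁻¹ • ∑ j, Y j ω) - fmat (Y i ω - μv))
        ≤ 3 * eunorm ((n:ℝ)⁻¹ • ∑ j, Y j ω - μv) := by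
      intro i
      have hl := fmat_lip (Y i ω - (n:ℝ)⁻¹ • ∑ j, Y j ω) (Y i ω - μv)
      have harg : (Y i ω - (n:ℝ)⁻¹ • ∑ j, Y j ω) - (Y i ω - μv)
          = μv - (n:ℝ)⁻¹ • ∑ j, Y j ω := by
        ext r
        simp only [Pi.sub_apply]
        ring
      rw [harg, eunorm_sub_comm] at hl
      exact hl
    calc (n:ℝ)⁻¹ * frob (∑ i, (fmat (Y i ω - (n:ℝ)⁻¹ • ∑ j, Y j ω) - fmat (Y i ω - μv)))
        ≤ (n:ℝ)⁻¹ * ∑ i, frob (fmat (Y i ω - (n:ℝ)⁻¹ • ∑ j, Y j ω) - fmat (Y i ω - μv)) :=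
          mul_le_mul_of_nonneg_left (frob_sum_le _ _) (inv_nonneg.mpr hnR.le)
      _ ≤ (n:ℝ)⁻¹ * ∑ _i : Fin n, 3 * eunorm ((n:ℝ)⁻¹ • ∑ j, Y j ω - μv) :=
          mul_le_mul_of_nonneg_left (Finset.sum_le_sum fun i _ => hterm i)
            (inv_nonneg.mpr hnR.le)
      _ = 3 * eunorm ((n:ℝ)⁻¹ • ∑ j, Y j ω - μv) := by
          rw [Finset.sum_const, Finset.card_univ, Fintype.card_fin, nsmul_eq_mul,
            ← mul_assoc, hninv, one_mul]
  -- final chain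
  refine le_trans (integral_mono_of_nonneg (Filter.Eventually.of_forall fun ω => ?_)
    ((hint1.const_mul 3).add hint2) (Filter.Eventually.of_forall hdom)) ?_
  · exact frob_nonneg _
  · simp only [Pi.add_apply]
    rw [integral_add (hint1.const_mul 3) hint2, integral_const_mul]
    have h1 := mul_le_mul_of_nonneg_left hbd1 (by norm_num : (0:ℝ) ≤ 3)
    have h2 := hbd2
    have : 3 * Real.sqrt (V / n) + Real.sqrt (V / n) = 4 * Real.sqrt (V / n) := by ring
    linarith
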